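/- Gearing-constrained Sharpe ratio maximisation (optimisation VIII): Let Σ be an n×n real symmetric positive definite matrix, 1 ∈ ℝⁿ the all-ones vector, and α ∈ ℝⁿ nonzero with B = α'Σ⁻¹1 > 0, and let g₀ > 0. Set θ₈* = g₀·Σ⁻¹α/B. Then 1'θ₈* = g₀, θ₈* ≠ 0, and for every nonzero θ ∈ ℝⁿ with 1'θ = g₀ one has θ'α/√(θ'Σθ) ≤ θ₈*'α/√(θ₈*'Σθ₈*) = √C, where C = α'Σ⁻¹α; equality holds if and only if θ = θ₈*. -/

import Mathlib

open Matrix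

variable {n : ℕ}


lemma pd_pos {M : Matrix (Fin n) (Fin n) ℝ} (hM : M.PosDef) {x : Fin n → ℝ} (hx : x ≠ 0) :
    0 < x ⬝ᵥ M *ᵥ x := by
  have := hM.dotProduct_mulVec_pos hx
  simpa using this

lemma symm_swap {M : Matrix (Fin n) (Fin n) ℝ} (hM : M.PosDef) (u v : Fin n → ℝ) :
    u ⬝ᵥ M *ᵥ v = v ⬝ᵥ M *ᵥ u := by
  have hMt : Mᵀ = M := by
    have := hM.isHermitian.eq
    exact isHermitian_iff_isSymm.mp this
  rw [Matrix.dotProduct_mulVec, ← Matrix.mulVec_transpose, hMt, dotProduct_comm]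

lemma expand_sub (M : Matrix (Fin n) (Fin n) ℝ) (a b : ℝ) (θ w : Fin n → ℝ) :
    (a • θ - b • w) ⬝ᵥ M *ᵥ (a • θ - b • w) =
      a^2*(θ ⬝ᵥ M *ᵥ θ) - a*b*(θ ⬝ᵥ M *ᵥ w) - a*b*(w ⬝ᵥ M *ᵥ θ) + b^2*(w ⬝ᵥ M *ᵥ w) := by
  simp only [Matrix.mulVec_sub, Matrix.mulVec_smul, dotProduct_sub, sub_dotProduct,
    dotProduct_smul, smul_dotProduct, smul_eq_mul]
  ring

lemma cs_eq {M : Matrix (Fin n) (Fin n) ℝ} (hM : M.PosDef) {θ w : Fin n → ℝ} (hw : w ≠ 0) :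
    (θ ⬝ᵥ M *ᵥ w)^2 ≤ (θ ⬝ᵥ M *ᵥ θ) * (w ⬝ᵥ M *ᵥ w) ∧
    ((θ ⬝ᵥ M *ᵥ w)^2 = (θ ⬝ᵥ M *ᵥ θ) * (w ⬝ᵥ M *ᵥ w) ↔
      (w ⬝ᵥ M *ᵥ w) • θ = (θ ⬝ᵥ M *ᵥ w) • w) := by
  set Cw := w ⬝ᵥ M *ᵥ w with hCw
  set P := θ ⬝ᵥ M *ᵥ w with hP
  set Q := θ ⬝ᵥ M *ᵥ θ with hQ
  have hCwpos : 0 < Cw := pd_pos hM hw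
  set v := Cw • θ - P • w with hv
  have hvv : v ⬝ᵥ M *ᵥ v = Cw * (Q * Cw - P^2) := by
    rw [hv, expand_sub, ← hP, ← hQ, ← hCw, symm_swap hM w θ, ← hP]
    ring
  have hnn : 0 ≤ v ⬝ᵥ M *ᵥ v := by
    have := hM.posSemidef.dotProduct_mulVec_nonneg v
    simpa using this
  constructor
  · nlinarith
  constructor
  · intro he
    have hvz : v = 0 := by
      by_contra h
      have := pd_pos hM (x := v) h
      rw [hvv] at this
      nlinarith
    have : Cw • θ = P • w := by
      have := sub_eq_zero.mp hvz
      exact this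
    exact this
  · intro h
    have hvz : v = 0 := sub_eq_zero.mpr h
    have : v ⬝ᵥ M *ᵥ v = 0 := by rw [hvz]; simp
    rw [hvv] at this
    have : Q * Cw - P^2 = 0 := by
      rcases mul_eq_zero.mp this with h1 | h1
      · exact absurd h1 hCwpos.ne'
      · exact h1
    nlinarith

/-- Gearing-constrained Sharpe ratio maximisation (optimisation VIII): with `B = α'Σ⁻¹1 > 0`,
`C = α'Σ⁻¹α`, `g₀ > 0` and `θ₈* = g₀·Σ⁻¹α/B`, we have `1'θ₈* = g₀`, `θ₈* ≠ 0`, and every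
nonzero `θ` with `1'θ = g₀` satisfies `θ'α/√(θ'Σθ) ≤ θ₈*'α/√(θ₈*'Σθ₈*) = √C`, with
equality iff `θ = θ₈*`. -/
theorem gearing_constrained_sharpe_max (n : ℕ)
    (M : Matrix (Fin n) (Fin n) ℝ) (hM : M.PosDef)
    (α : Fin n → ℝ) (hα : α ≠ 0)
    (B C : ℝ)
    (hB : B = α ⬝ᵥ M⁻¹ *ᵥ (1 : Fin n → ℝ)) (hBpos : 0 < B)
    (hC : C = α ⬝ᵥ M⁻¹ *ᵥ α)
    (g₀ : ℝ) (hg₀ : 0 < g₀)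
    (θ₈ : Fin n → ℝ) (hθ₈ : θ₈ = (g₀ / B) • (M⁻¹ *ᵥ α)) :
    (1 : Fin n → ℝ) ⬝ᵥ θ₈ = g₀ ∧ θ₈ ≠ 0 ∧
    θ₈ ⬝ᵥ α / Real.sqrt (θ₈ ⬝ᵥ M *ᵥ θ₈) = Real.sqrt C ∧
    ∀ θ : Fin n → ℝ, θ ≠ 0 → (1 : Fin n → ℝ) ⬝ᵥ θ = g₀ →
      θ ⬝ᵥ α / Real.sqrt (θ ⬝ᵥ M *ᵥ θ) ≤ Real.sqrt C ∧
      (θ ⬝ᵥ α / Real.sqrt (θ ⬝ᵥ M *ᵥ θ) = Real.sqrt C ↔ θ = θ₈) := by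
  set w := M⁻¹ *ᵥ α with hwdef
  have hdet : IsUnit M.det := isUnit_iff_ne_zero.mpr hM.det_pos.ne'
  have hMw : M *ᵥ w = α := by
    rw [hwdef, Matrix.mulVec_mulVec, Matrix.mul_nonsing_inv M hdet, Matrix.one_mulVec]
  have hw : w ≠ 0 := by
    intro h
    apply hα
    rw [← hMw, h, Matrix.mulVec_zero]
  have hCw : w ⬝ᵥ M *ᵥ w = C := by
    rw [hMw, hC, hwdef, dotProduct_comm]
  have hCpos : 0 < C := hCw ▸ pd_pos hM hw
  have hBw : (1 : Fin n → ℝ) ⬝ᵥ w = B := by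
    rw [hB, hwdef, symm_swap hM.inv α 1]
  have hgb : 0 < g₀ / B := div_pos hg₀ hBpos
  -- facts about θ₈
  have hθ₈w : θ₈ = (g₀ / B) • w := hθ₈
  have h1 : (1 : Fin n → ℝ) ⬝ᵥ θ₈ = g₀ := by
    rw [hθ₈w, dotProduct_smul, smul_eq_mul, hBw, div_mul_cancel₀ _ hBpos.ne']
  have h2 : θ₈ ≠ 0 := by
    rw [hθ₈w]
    exact smul_ne_zero hgb.ne' hw
  have hθ₈α : θ₈ ⬝ᵥ α = (g₀ / B) * C := by
    rw [hθ₈w, smul_dotProduct, smul_eq_mul, ← hMw, symm_swap hM w w, hCw]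
  have hθ₈M : θ₈ ⬝ᵥ M *ᵥ θ₈ = (g₀ / B)^2 * C := by
    rw [hθ₈w, smul_dotProduct, Matrix.mulVec_smul, dotProduct_smul, smul_eq_mul, smul_eq_mul,
      hCw]
    ring
  have hsq : Real.sqrt (θ₈ ⬝ᵥ M *ᵥ θ₈) = (g₀ / B) * Real.sqrt C := by
    rw [hθ₈M, Real.sqrt_mul (sq_nonneg _), Real.sqrt_sq hgb.le]
  have h3 : θ₈ ⬝ᵥ α / Real.sqrt (θ₈ ⬝ᵥ M *ᵥ θ₈) = Real.sqrt C := by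
    rw [hθ₈α, hsq, mul_div_mul_left C (Real.sqrt C) hgb.ne', Real.div_sqrt]
  refine ⟨h1, h2, h3, ?_⟩
  intro θ hθ hθg
  have hQpos : 0 < θ ⬝ᵥ M *ᵥ θ := pd_pos hM hθ
  have hsqQ : 0 < Real.sqrt (θ ⬝ᵥ M *ᵥ θ) := Real.sqrt_pos.mpr hQpos
  obtain ⟨hle, heq⟩ := cs_eq hM (θ := θ) hw
  rw [hCw] at hle heq
  have hPα : θ ⬝ᵥ M *ᵥ w = θ ⬝ᵥ α := by rw [hMw]
  rw [hPα] at hle heq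
  have hPle : θ ⬝ᵥ α ≤ Real.sqrt (θ ⬝ᵥ M *ᵥ θ) * Real.sqrt C := by
    have h1' : θ ⬝ᵥ α ≤ Real.sqrt ((θ ⬝ᵥ α)^2) := by
      rw [Real.sqrt_sq_eq_abs]
      exact le_abs_self _
    calc θ ⬝ᵥ α ≤ Real.sqrt ((θ ⬝ᵥ α)^2) := h1'
      _ ≤ Real.sqrt ((θ ⬝ᵥ M *ᵥ θ) * C) := Real.sqrt_le_sqrt hle
      _ = Real.sqrt (θ ⬝ᵥ M *ᵥ θ) * Real.sqrt C := Real.sqrt_mul hQpos.le _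
  have hratio : θ ⬝ᵥ α / Real.sqrt (θ ⬝ᵥ M *ᵥ θ) ≤ Real.sqrt C :=
    (div_le_iff₀ hsqQ).mpr (by linarith [hPle, mul_comm (Real.sqrt (θ ⬝ᵥ M *ᵥ θ)) (Real.sqrt C)])
  refine ⟨hratio, ?_, ?_⟩
  · intro he
    have hP : θ ⬝ᵥ α = Real.sqrt (θ ⬝ᵥ M *ᵥ θ) * Real.sqrt C := by
      field_simp at he
      linarith [he]
    have hPpos : 0 < θ ⬝ᵥ α := hP ▸ mul_pos hsqQ (Real.sqrt_pos.mpr hCpos)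
    have hP2 : (θ ⬝ᵥ α)^2 = (θ ⬝ᵥ M *ᵥ θ) * C := by
      rw [hP]
      rw [mul_pow, Real.sq_sqrt hQpos.le, Real.sq_sqrt hCpos.le]
    have hkey : C • θ = (θ ⬝ᵥ α) • w := heq.mp hP2
    have hθw : θ = ((θ ⬝ᵥ α) / C) • w := by
      have := congrArg (fun x => (C⁻¹ : ℝ) • x) hkey
      simpa [smul_smul, inv_mul_cancel₀ hCpos.ne', div_eq_inv_mul, mul_comm] using this
    have hc : (θ ⬝ᵥ α) / C = g₀ / B := by
      have hone : (1 : Fin n → ℝ) ⬝ᵥ θ = ((θ ⬝ᵥ α) / C) * B := by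
        calc (1 : Fin n → ℝ) ⬝ᵥ θ = (1 : Fin n → ℝ) ⬝ᵥ (((θ ⬝ᵥ α) / C) • w) := by rw [← hθw]
          _ = ((θ ⬝ᵥ α) / C) * B := by rw [dotProduct_smul, smul_eq_mul, hBw]
      rw [hθg] at hone
      rw [eq_div_iff hBpos.ne']
      linarith
    rw [hθw, hc, ← hθ₈w]
  · intro he
    rw [he, h3]
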